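/- arXiv:1404.7598 — 6 statements merged into one kernel-verified Lean document; each statement's English description precedes it below -/
import Mathlib

section
/- Let γ ∈ (0, 1/2). Then for every x ∈ ℝ, ∫₀^∞ min(|x·γ·t^{γ−1}|, |x·γ·t^{γ−1}|²) dt = C·|x|^{1/(1−γ)}, where C = γ^{1/(1−γ)}·(γ^{−1} + (1−2γ)^{−1}). -/
open MeasureTheory

theorem fractional_kernel_integral
    (γ : ℝ) (hγ : γ ∈ Set.Ioo (0:ℝ) (1/2)) :
    ∀ x : ℝ,
      ∫ t in Set.Ioi (0:ℝ), min |x * (γ * t ^ (γ - 1))| (|x * (γ * t ^ (γ - 1))| ^ 2)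
        = (γ ^ (1 / (1 - γ)) * (γ⁻¹ + (1 - 2 * γ)⁻¹)) * |x| ^ (1 / (1 - γ)) := by
  obtain ⟨hγ0, hγ2⟩ := hγ
  have h1γ : (0:ℝ) < 1 - γ := by linarith
  have h12γ : (0:ℝ) < 1 - 2*γ := by linarith
  intro x
  rcases eq_or_ne x 0 with rfl | hx
  · rw [abs_zero, Real.zero_rpow (by positivity : (1:ℝ)/(1-γ) ≠ 0), mul_zero]
    norm_num
  have hx' : 0 < |x| := abs_pos.mpr hx
  set a : ℝ := |x| * γ with ha
  have ha0 : 0 < a := by positivity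
  set t₀ : ℝ := a ^ ((1:ℝ)/(1-γ)) with ht₀
  have ht₀0 : 0 < t₀ := Real.rpow_pos_of_pos ha0 _
  have ht₀pow : t₀ ^ (γ - 1) = a⁻¹ := by
    rw [ht₀, ← Real.rpow_mul ha0.le,
      show (1:ℝ)/(1-γ) * (γ-1) = -1 by field_simp; ring, Real.rpow_neg_one]
  have key : a * t₀ ^ (γ - 1) = 1 := by
    rw [ht₀pow, mul_inv_cancel₀ ha0.ne']
  -- pointwise form of integrand
  have habs : ∀ t ∈ Set.Ioi (0:ℝ), |x * (γ * t ^ (γ - 1))| = a * t ^ (γ - 1) := by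
    intro t ht
    have h1 : (0:ℝ) < t ^ (γ - 1) := Real.rpow_pos_of_pos ht _
    rw [abs_mul, abs_mul, abs_of_pos hγ0, abs_of_pos h1, ha, mul_assoc]
  -- split
  have hsplit : Set.Ioc (0:ℝ) t₀ ∪ Set.Ioi t₀ = Set.Ioi (0:ℝ) :=
    Set.Ioc_union_Ioi_eq_Ioi ht₀0.le
  have hm : Measurable fun t : ℝ => |x * (γ * t ^ (γ - 1))| := by fun_prop
  have hmeas : Measurable fun t : ℝ =>
      min |x * (γ * t ^ (γ - 1))| (|x * (γ * t ^ (γ - 1))| ^ 2) :=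
    hm.min (hm.pow_const 2)
  have hint1 : IntegrableOn (fun t : ℝ =>
      min |x * (γ * t ^ (γ - 1))| (|x * (γ * t ^ (γ - 1))| ^ 2)) (Set.Ioc 0 t₀) := by
    have : IntegrableOn (fun t : ℝ => a * t ^ (γ - 1)) (Set.Ioc 0 t₀) := by
      have := (intervalIntegral.intervalIntegrable_rpow' (a := 0) (b := t₀)
        (by linarith : (-1:ℝ) < γ - 1)).const_mul a
      rwa [intervalIntegrable_iff_integrableOn_Ioc_of_le ht₀0.le] at this
    refine MeasureTheory.Integrable.mono this ?_ ?_
    · exact hmeas.aestronglyMeasurable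
    · filter_upwards [ae_restrict_mem measurableSet_Ioc] with t ht
      have h1 : (0:ℝ) < t ^ (γ - 1) := Real.rpow_pos_of_pos ht.1 _
      have := habs t ht.1
      rw [Real.norm_eq_abs, Real.norm_eq_abs,
        abs_of_nonneg (le_min (abs_nonneg _) (by positivity)), this,
        abs_of_pos (by positivity : (0:ℝ) < a * t ^ (γ - 1))]
      exact min_le_left _ _
  have hint2 : IntegrableOn (fun t : ℝ =>
      min |x * (γ * t ^ (γ - 1))| (|x * (γ * t ^ (γ - 1))| ^ 2)) (Set.Ioi t₀) := by
    have : IntegrableOn (fun t : ℝ => a^2 * t ^ (2*(γ - 1))) (Set.Ioi t₀) :=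
      (integrableOn_Ioi_rpow_of_lt (by linarith) ht₀0).const_mul _
    refine MeasureTheory.Integrable.mono this ?_ ?_
    · exact hmeas.aestronglyMeasurable
    · filter_upwards [ae_restrict_mem measurableSet_Ioi] with t ht
      have ht0 : (0:ℝ) < t := ht₀0.trans ht
      have h1 : (0:ℝ) < t ^ (γ - 1) := Real.rpow_pos_of_pos ht0 _
      have h2 : (a * t ^ (γ - 1))^2 = a^2 * t ^ (2*(γ-1)) := by
        rw [mul_pow, ← Real.rpow_natCast (t ^ (γ-1)), ← Real.rpow_mul ht0.le]
        norm_num [mul_comm]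
      rw [Real.norm_eq_abs, Real.norm_eq_abs,
        abs_of_nonneg (le_min (abs_nonneg _) (by positivity)),
        habs t ht0, ← h2, abs_of_nonneg (sq_nonneg _)]
      exact min_le_right _ _
  rw [← hsplit, setIntegral_union (Set.Ioc_disjoint_Ioi le_rfl) measurableSet_Ioi hint1 hint2]
  -- first piece
  have e1 : ∫ t in Set.Ioc (0:ℝ) t₀,
      min |x * (γ * t ^ (γ - 1))| (|x * (γ * t ^ (γ - 1))| ^ 2)
      = a * (t₀ ^ γ / γ) := by
    rw [setIntegral_congr_fun measurableSet_Ioc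
      (g := fun t : ℝ => a * t ^ (γ - 1)) ?_]
    · rw [← intervalIntegral.integral_of_le ht₀0.le, intervalIntegral.integral_const_mul,
        integral_rpow (Or.inl (by linarith))]
      norm_num [Real.zero_rpow (by positivity : γ ≠ 0)]
    · intro t ht
      dsimp only
      have ht0 : (0:ℝ) < t := ht.1
      have h1 : (0:ℝ) < t ^ (γ - 1) := Real.rpow_pos_of_pos ht0 _
      have hge : 1 ≤ a * t ^ (γ - 1) := by
        calc (1:ℝ) = a * t₀ ^ (γ - 1) := key.symm
        _ ≤ a * t ^ (γ - 1) := by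
            apply mul_le_mul_of_nonneg_left _ ha0.le
            exact Real.rpow_le_rpow_of_nonpos ht0 ht.2 (by linarith)
      rw [habs t ht0, min_eq_left]
      nlinarith [h1]
  -- second piece
  have e2 : ∫ t in Set.Ioi t₀,
      min |x * (γ * t ^ (γ - 1))| (|x * (γ * t ^ (γ - 1))| ^ 2)
      = a^2 * (t₀ ^ (2*γ - 1) / (1 - 2*γ)) := by
    rw [setIntegral_congr_fun measurableSet_Ioi
      (g := fun t : ℝ => a^2 * t ^ (2*(γ - 1))) ?_]
    · rw [MeasureTheory.integral_const_mul, integral_Ioi_rpow_of_lt (by linarith) ht₀0]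
      rw [show (2*(γ-1)+1 : ℝ) = 2*γ-1 by ring]
      have h2γ : (2*γ-1:ℝ) ≠ 0 := by linarith
      field_simp
      ring
    · intro t ht
      dsimp only
      have ht0 : (0:ℝ) < t := ht₀0.trans ht
      have h1 : (0:ℝ) < t ^ (γ - 1) := Real.rpow_pos_of_pos ht0 _
      have hle : a * t ^ (γ - 1) ≤ 1 := by
        calc a * t ^ (γ - 1) ≤ a * t₀ ^ (γ - 1) := by
              apply mul_le_mul_of_nonneg_left _ ha0.le
              exact Real.rpow_le_rpow_of_nonpos ht₀0 ht.le (by linarith)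
        _ = 1 := key
      have h2 : (a * t ^ (γ - 1))^2 = a^2 * t ^ (2*(γ-1)) := by
        rw [mul_pow, ← Real.rpow_natCast (t ^ (γ-1)), ← Real.rpow_mul ht0.le]
        norm_num [mul_comm]
      rw [habs t ht0, min_eq_right, h2]
      have hu : (0:ℝ) < a * t ^ (γ - 1) := by positivity
      nlinarith [mul_le_mul_of_nonneg_left hle hu.le]
  rw [e1, e2]
  -- final algebra
  have hA : a * t₀ ^ γ = a ^ ((1:ℝ)/(1-γ)) := by
    rw [ht₀, ← Real.rpow_mul ha0.le, ← Real.rpow_one_add' ha0.le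
      (ne_of_gt (by nlinarith [mul_pos (one_div_pos.mpr h1γ) hγ0]))]
    congr 1
    field_simp
    ring
  have hB : a^2 * t₀ ^ (2*γ - 1) = a ^ ((1:ℝ)/(1-γ)) := by
    rw [ht₀, ← Real.rpow_mul ha0.le, ← Real.rpow_natCast a 2,
      ← Real.rpow_add ha0]
    congr 1
    push_cast
    field_simp
    ring
  have hC : a ^ ((1:ℝ)/(1-γ)) = γ ^ ((1:ℝ)/(1-γ)) * |x| ^ ((1:ℝ)/(1-γ)) := by
    rw [ha, Real.mul_rpow hx'.le hγ0.le, mul_comm]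
  rw [mul_div_assoc' , mul_div_assoc', hA, hB, hC]
  field_simp
end

section
/- Let v < 0 and x ∈ ℝ. Then ∫₀^∞ min(|x·v·e^{vt}|, |x·v·e^{vt}|²) dt = (|xv|²/(2|v|))·1_{|xv|≤1} + ((|xv| − 1/2)/|v|)·1_{|xv|>1}. -/
open MeasureTheory

lemma supOU_exp_integral_Ioi (b c : ℝ) (hb : b < 0) :
    ∫ t in Set.Ioi c, Real.exp (b * t) = -(Real.exp (b * c) / b) := by
  have hd : ∀ t ∈ Set.Ici c,
      HasDerivAt (fun t => Real.exp (b * t) / b) (Real.exp (b * t)) t := by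
    intro t _
    have h1 : HasDerivAt (fun t : ℝ => b * t) b t := by
      simpa using (hasDerivAt_id t).const_mul b
    have h2 := (h1.exp).div_const b
    simpa [mul_comm, mul_div_assoc, ne_of_lt hb] using h2
  have htend : Filter.Tendsto (fun t => Real.exp (b * t) / b)
      Filter.atTop (nhds 0) := by
    have hbt : Filter.Tendsto (fun t : ℝ => b * t) Filter.atTop Filter.atBot := by
      simpa using Filter.tendsto_id.const_mul_atTop_of_neg hb (l := Filter.atTop)
    have := (Real.tendsto_exp_atBot.comp hbt).div_const b
    simpa using this
  have := integral_Ioi_of_hasDerivAt_of_nonneg' hd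
    (fun t _ => (Real.exp_pos _).le) htend
  simpa using this

theorem supOU_kernel_integral
    (v x : ℝ) (hv : v < 0) :
    ∫ t in Set.Ioi (0:ℝ),
        min |x * v * Real.exp (v * t)| (|x * v * Real.exp (v * t)| ^ 2)
      = (if |x * v| ≤ 1 then |x * v| ^ 2 / (2 * |v|) else 0)
        + (if 1 < |x * v| then (|x * v| - 1/2) / |v| else 0) := by
  have hv0 : v ≠ 0 := ne_of_lt hv
  have habsv : |v| = -v := abs_of_neg hv
  set a : ℝ := |x * v| with ha
  have ha0 : 0 ≤ a := abs_nonneg _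
  have hrw : ∀ t : ℝ, |x * v * Real.exp (v * t)| = a * Real.exp (v * t) := by
    intro t; rw [abs_mul, Real.abs_exp]
  have h2v : (2 : ℝ) * v < 0 := by linarith
  by_cases h : a ≤ 1
  · -- small case: integrand is the square
    have hcongr : ∀ t ∈ Set.Ioi (0:ℝ),
        min |x * v * Real.exp (v * t)| (|x * v * Real.exp (v * t)| ^ 2)
          = a ^ 2 * Real.exp (2 * v * t) := by
      intro t ht
      have hexple : Real.exp (v * t) ≤ 1 := by
        rw [Real.exp_le_one_iff]
        nlinarith [Set.mem_Ioi.mp ht]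
      have hs0 : 0 ≤ a * Real.exp (v * t) := by positivity
      have hs1 : a * Real.exp (v * t) ≤ 1 := by nlinarith [Real.exp_pos (v * t)]
      rw [hrw, min_eq_right (by nlinarith)]
      rw [mul_pow, sq (Real.exp (v * t)), ← Real.exp_add]
      ring_nf
    rw [setIntegral_congr_fun measurableSet_Ioi hcongr, integral_const_mul,
      supOU_exp_integral_Ioi _ _ h2v]
    rw [if_pos h, if_neg (not_lt.mpr h)]
    rw [habsv]
    simp only [mul_zero, Real.exp_zero]
    field_simp
    ring
  · -- large case
    push_neg at h
    have ha1 : 0 < a := lt_trans one_pos h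
    have hloga : 0 < Real.log a := Real.log_pos h
    set t₀ : ℝ := Real.log a / (-v) with ht₀def
    have ht₀ : 0 < t₀ := div_pos hloga (by linarith)
    have hvt₀ : v * t₀ = -Real.log a := by
      rw [ht₀def, div_neg, mul_neg, mul_div_assoc', mul_div_cancel_left₀ _ hv0]
    have hexpt₀ : Real.exp (v * t₀) = a⁻¹ := by
      rw [hvt₀, Real.exp_neg, Real.exp_log ha1]
    -- split the integral
    have hsplit : Set.Ioc (0:ℝ) t₀ ∪ Set.Ioi t₀ = Set.Ioi (0:ℝ) :=
      Set.Ioc_union_Ioi_eq_Ioi ht₀.le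
    have hmin_cont : Continuous (fun t : ℝ =>
        min |x * v * Real.exp (v * t)| (|x * v * Real.exp (v * t)| ^ 2)) := by
      fun_prop
    have hint1 : IntegrableOn (fun t : ℝ =>
        min |x * v * Real.exp (v * t)| (|x * v * Real.exp (v * t)| ^ 2))
        (Set.Ioc 0 t₀) := by
      exact (hmin_cont.integrableOn_Ioc)
    have hint2 : IntegrableOn (fun t : ℝ =>
        min |x * v * Real.exp (v * t)| (|x * v * Real.exp (v * t)| ^ 2))
        (Set.Ioi t₀) := by
      have hexpint : IntegrableOn (fun t : ℝ => a ^ 2 * Real.exp (2 * v * t))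
          (Set.Ioi t₀) := by
        have := (exp_neg_integrableOn_Ioi t₀ (b := -(2*v)) (by linarith)).const_mul (a ^ 2)
        simpa [IntegrableOn] using this
      apply hexpint.congr_fun _ measurableSet_Ioi
      intro t ht
      symm
      show min |x * v * Real.exp (v * t)| (|x * v * Real.exp (v * t)| ^ 2)
          = a ^ 2 * Real.exp (2 * v * t)
      have htgt : t₀ < t := ht
      have hexple : Real.exp (v * t) ≤ a⁻¹ := by
        rw [← hexpt₀, Real.exp_le_exp]
        nlinarith
      have hs1 : a * Real.exp (v * t) ≤ 1 := by
        calc a * Real.exp (v * t) ≤ a * a⁻¹ := by nlinarith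
        _ = 1 := mul_inv_cancel₀ (ne_of_gt ha1)
      have hs0 : 0 ≤ a * Real.exp (v * t) := by positivity
      rw [hrw, min_eq_right (by nlinarith)]
      rw [mul_pow, sq (Real.exp (v * t)), ← Real.exp_add]
      ring_nf
    rw [← hsplit, setIntegral_union (Set.Ioc_disjoint_Ioi le_rfl) measurableSet_Ioi
      hint1 hint2]
    -- first piece
    have hpiece1 : ∫ t in Set.Ioc (0:ℝ) t₀,
        min |x * v * Real.exp (v * t)| (|x * v * Real.exp (v * t)| ^ 2)
        = a * (Real.exp (v * t₀) / v - 1 / v) := by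
      have hcongr : ∀ t ∈ Set.Ioc (0:ℝ) t₀,
          min |x * v * Real.exp (v * t)| (|x * v * Real.exp (v * t)| ^ 2)
            = a * Real.exp (v * t) := by
        intro t ht
        have hle : t ≤ t₀ := ht.2
        have hexpge : a⁻¹ ≤ Real.exp (v * t) := by
          rw [← hexpt₀, Real.exp_le_exp]
          nlinarith
        have hs1 : 1 ≤ a * Real.exp (v * t) := by
          calc (1:ℝ) = a * a⁻¹ := (mul_inv_cancel₀ (ne_of_gt ha1)).symm
          _ ≤ a * Real.exp (v * t) := by nlinarith
        rw [hrw, min_eq_left (by nlinarith)]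
      rw [setIntegral_congr_fun measurableSet_Ioc hcongr]
      rw [← intervalIntegral.integral_of_le ht₀.le]
      have hderivs : ∀ t ∈ Set.uIcc (0:ℝ) t₀,
          HasDerivAt (fun t : ℝ => a * Real.exp (v * t) / v) (a * Real.exp (v * t)) t := by
        intro t _
        have h1 : HasDerivAt (fun t : ℝ => v * t) v t := by
          simpa using (hasDerivAt_id t).const_mul v
        have h2 := ((h1.exp).const_mul a).div_const v
        have h3 : a * (Real.exp (v * t) * v) / v = a * Real.exp (v * t) := by
          rw [div_eq_iff hv0]; ring
        rw [h3] at h2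
        exact h2
      have hftc := intervalIntegral.integral_eq_sub_of_hasDerivAt hderivs
        ((by fun_prop : Continuous fun t : ℝ => a * Real.exp (v * t)).intervalIntegrable _ _)
      rw [hftc]
      simp only [mul_zero, Real.exp_zero, mul_one]
      ring
    -- second piece
    have hpiece2 : ∫ t in Set.Ioi t₀,
        min |x * v * Real.exp (v * t)| (|x * v * Real.exp (v * t)| ^ 2)
        = a ^ 2 * (-(Real.exp (2 * v * t₀) / (2 * v))) := by
      have hcongr : ∀ t ∈ Set.Ioi t₀,
          min |x * v * Real.exp (v * t)| (|x * v * Real.exp (v * t)| ^ 2)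
            = a ^ 2 * Real.exp (2 * v * t) := by
        intro t ht
        have htgt : t₀ < t := ht
        have hexple : Real.exp (v * t) ≤ a⁻¹ := by
          rw [← hexpt₀, Real.exp_le_exp]
          nlinarith
        have hs1 : a * Real.exp (v * t) ≤ 1 := by
          calc a * Real.exp (v * t) ≤ a * a⁻¹ := by nlinarith
          _ = 1 := mul_inv_cancel₀ (ne_of_gt ha1)
        have hs0 : 0 ≤ a * Real.exp (v * t) := by positivity
        rw [hrw, min_eq_right (by nlinarith)]
        rw [mul_pow, sq (Real.exp (v * t)), ← Real.exp_add]
        ring_nf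
      rw [setIntegral_congr_fun measurableSet_Ioi hcongr, integral_const_mul,
        supOU_exp_integral_Ioi _ _ h2v]
    rw [hpiece1, hpiece2]
    have hexp2t₀ : Real.exp (2 * v * t₀) = a⁻¹ ^ 2 := by
      rw [show 2 * v * t₀ = v * t₀ + v * t₀ by ring, Real.exp_add, hexpt₀, sq]
    rw [hexpt₀, hexp2t₀, if_neg (not_le.mpr h), if_pos h, habsv]
    field_simp
    ring
end

section
/- A bounded real-valued random variable which is not almost surely constant is not infinitely divisible. -/
open MeasureTheory ProbabilityTheory

/-- A real random variable is infinitely divisible if for every `n ≥ 1` it is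
distributed as the sum of `n` i.i.d. random variables (on some probability space). -/
def IsInfinitelyDivisibleRV {Ω : Type*} [MeasurableSpace Ω] (P : Measure Ω)
    (X : Ω → ℝ) : Prop :=
  ∀ n : ℕ, 1 ≤ n →
    ∃ (Ω' : Type) (_ : MeasurableSpace Ω') (Q : Measure Ω') (_ : IsProbabilityMeasure Q)
      (Y : Fin n → Ω' → ℝ),
        iIndepFun Y Q ∧
        (∀ i j : Fin n, IdentDistrib (Y i) (Y j) Q Q) ∧
        IdentDistrib X (fun ω' => ∑ i, Y i ω') P Q

theorem bounded_nonconstant_not_infinitely_divisible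
    {Ω : Type*} [MeasurableSpace Ω] (P : Measure Ω) [IsProbabilityMeasure P]
    (X : Ω → ℝ) (hX : Measurable X)
    (hbdd : ∃ C : ℝ, ∀ᵐ ω ∂P, |X ω| ≤ C)
    (hnc : ¬ ∃ c : ℝ, ∀ᵐ ω ∂P, X ω = c) :
    ¬ IsInfinitelyDivisibleRV P X := by
  obtain ⟨C, hC⟩ := hbdd
  haveI : (MeasureTheory.ae P).NeBot := by
    refine Filter.NeBot.mono ?_ le_rfl
    exact MeasureTheory.ae_neBot.mpr (IsProbabilityMeasure.ne_zero P)
  have hC0 : 0 ≤ C := by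
    obtain ⟨ω, hω⟩ := hC.exists
    linarith [abs_nonneg (X ω)]
  have hXm2 : MemLp X 2 P :=
    (memLp_top_of_bound hX.aestronglyMeasurable C hC).mono_exponent le_top
  have hvar : 0 < variance X P := by
    rcases eq_or_lt_of_le (variance_nonneg X P) with h0 | h
    · exfalso
      have hev : evariance X P = 0 := by
        have hlt := hXm2.evariance_lt_top
        rw [variance] at h0
        rcases (ENNReal.toReal_eq_zero_iff _).mp h0.symm with h | h
        · exact h
        · exact absurd h hlt.ne
      exact hnc ⟨P[X], (evariance_eq_zero_iff hX.aemeasurable).mp hev⟩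
    · exact h
  intro hid
  obtain ⟨n, hn1, hnlt⟩ : ∃ n : ℕ, 1 ≤ n ∧ C ^ 2 / n < variance X P := by
    obtain ⟨n, hn⟩ := exists_nat_gt (C ^ 2 / variance X P)
    refine ⟨n + 1, Nat.le_add_left 1 n, ?_⟩
    have hn' : C ^ 2 / variance X P < (n + 1 : ℕ) := by push_cast; push_cast at hn; linarith
    rw [div_lt_iff₀ (by positivity)]
    rw [div_lt_iff₀ hvar] at hn'
    linarith
  obtain ⟨Ω', mΩ', Q, hQ, Y, hindep, hident, hXsum⟩ := hid n hn1
  have hYae : ∀ i, AEMeasurable (Y i) Q := fun i => (hident i i).aemeasurable_fst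
  have i0 : Fin n := ⟨0, hn1⟩
  haveI : Nonempty (Fin n) := ⟨i0⟩
  have hnpos : (0 : ℝ) < n := by exact_mod_cast hn1
  -- P-null sets for X beyond the bound
  have hPgt : P {ω | C < X ω} = 0 := by
    refine measure_mono_null (fun ω hω => ?_) (ae_iff.mp hC)
    simp only [Set.mem_setOf_eq] at hω ⊢
    intro habs; exact absurd (le_abs_self (X ω) |>.trans habs) (not_le.mpr hω)
  have hPlt : P {ω | X ω < -C} = 0 := by
    refine measure_mono_null (fun ω hω => ?_) (ae_iff.mp hC)
    simp only [Set.mem_setOf_eq] at hω ⊢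
    intro habs; linarith [(abs_le.mp habs).1]
  -- transfer to the sum
  have hQgt : Q {ω' | C < ∑ i, Y i ω'} = 0 := by
    have := hXsum.measure_mem_eq (measurableSet_Ioi (a := C))
    simpa [Set.preimage, Set.mem_Ioi] using this.symm.trans hPgt
  have hQlt : Q {ω' | ∑ i, Y i ω' < -C} = 0 := by
    have := hXsum.measure_mem_eq (measurableSet_Iio (a := -C))
    simpa [Set.preimage, Set.mem_Iio] using this.symm.trans hPlt
  -- each Y i is a.s. bounded by C / n
  have key : ∀ (a : ℝ) (s : Set ℝ), MeasurableSet s → (∀ x ∈ s, a < x) →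
      Q {ω' | (n : ℝ) * a < ∑ i, Y i ω'} = 0 → Q (Y i0 ⁻¹' s) = 0 := by
    intro a s hs hsx hnull
    by_contra hpos
    have hprod : Q (⋂ i, Y i ⁻¹' s) = ∏ i : Fin n, Q (Y i ⁻¹' s) :=
      hindep.meas_iInter (fun i => ⟨s, hs, rfl⟩)
    have heq : ∀ i, Q (Y i ⁻¹' s) = Q (Y i0 ⁻¹' s) := fun i =>
      (hident i i0).measure_mem_eq hs
    have hsub : (⋂ i, Y i ⁻¹' s) ⊆ {ω' | (n : ℝ) * a < ∑ i, Y i ω'} := by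
      intro ω' hω'
      simp only [Set.mem_iInter, Set.mem_preimage] at hω'
      have : ∀ i : Fin n, a < Y i ω' := fun i => hsx _ (hω' i)
      calc (n : ℝ) * a = ∑ _i : Fin n, a := by simp [mul_comm]
        _ < ∑ i, Y i ω' := Finset.sum_lt_sum_of_nonempty
            Finset.univ_nonempty (fun i _ => this i)
    have : Q (⋂ i, Y i ⁻¹' s) = 0 := measure_mono_null hsub hnull
    rw [hprod] at this
    simp only [heq, Finset.prod_const] at this
    rw [Finset.card_fin] at this
    exact hpos (pow_eq_zero_iff (by omega) |>.mp this)
  have hY0_ub : Q {ω' | C / n < Y i0 ω'} = 0 := by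
    have := key (C / n) (Set.Ioi (C / n)) measurableSet_Ioi (fun x hx => hx) ?_
    · simpa [Set.preimage, Set.mem_Ioi] using this
    · have : (n : ℝ) * (C / n) = C := by field_simp
      rw [this]; exact hQgt
  have hY0_lb : Q {ω' | Y i0 ω' < -(C / n)} = 0 := by
    -- use key with the "negated" statement: apply to -Y? simpler: direct argument
    by_contra hpos
    have hs : MeasurableSet (Set.Iio (-(C / n))) := measurableSet_Iio
    have hprod : Q (⋂ i, Y i ⁻¹' Set.Iio (-(C / n))) = ∏ i : Fin n, Q (Y i ⁻¹' Set.Iio (-(C / n))) :=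
      hindep.meas_iInter (fun i => ⟨_, hs, rfl⟩)
    have heq : ∀ i, Q (Y i ⁻¹' Set.Iio (-(C / n))) = Q (Y i0 ⁻¹' Set.Iio (-(C / n))) := fun i =>
      (hident i i0).measure_mem_eq hs
    have hsub : (⋂ i, Y i ⁻¹' Set.Iio (-(C / n))) ⊆ {ω' | ∑ i, Y i ω' < -C} := by
      intro ω' hω'
      simp only [Set.mem_iInter, Set.mem_preimage, Set.mem_Iio] at hω'
      calc ∑ i, Y i ω' < ∑ _i : Fin n, (-(C / n)) := Finset.sum_lt_sum_of_nonempty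
            Finset.univ_nonempty (fun i _ => hω' i)
        _ = -C := by rw [Finset.sum_const, Finset.card_fin, nsmul_eq_mul]; field_simp
    have h0 : Q (⋂ i, Y i ⁻¹' Set.Iio (-(C / n))) = 0 := measure_mono_null hsub hQlt
    rw [hprod] at h0
    simp only [heq, Finset.prod_const] at h0
    rw [Finset.card_fin] at h0
    have := pow_eq_zero_iff (n := n) (by omega) |>.mp h0
    exact hpos (by simpa [Set.preimage, Set.mem_Iio] using this)
  have hYbdd : ∀ i, ∀ᵐ ω' ∂Q, |Y i ω'| ≤ C / n := by
    intro i
    have h1 : Q {ω' | C / n < Y i ω'} = 0 := by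
      have := (hident i i0).measure_mem_eq (measurableSet_Ioi (a := C / n))
      simpa [Set.preimage, Set.mem_Ioi] using this.trans hY0_ub
    have h2 : Q {ω' | Y i ω' < -(C / n)} = 0 := by
      have := (hident i i0).measure_mem_eq (measurableSet_Iio (a := -(C / n)))
      simpa [Set.preimage, Set.mem_Iio] using this.trans hY0_lb
    have h1' : ∀ᵐ ω' ∂Q, ¬ (C / n < Y i ω') := ae_iff.mpr (by simpa using h1)
    have h2' : ∀ᵐ ω' ∂Q, ¬ (Y i ω' < -(C / n)) := ae_iff.mpr (by simpa using h2)
    filter_upwards [h1', h2'] with ω' k1 k2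
    rw [abs_le]; constructor <;> [linarith [not_lt.mp k2]; linarith [not_lt.mp k1]]
  have hCn0 : 0 ≤ C / n := by positivity
  have hYm2 : ∀ i, MemLp (Y i) 2 Q := fun i =>
    (memLp_top_of_bound (hYae i).aestronglyMeasurable _ (hYbdd i)).mono_exponent le_top
  -- variance bound for each Y i
  have hvarY : ∀ i, variance (Y i) Q ≤ (C / n) ^ 2 := by
    intro i
    refine (variance_le_expectation_sq (hYae i).aestronglyMeasurable).trans ?_
    have hint : Integrable (fun ω' => Y i ω' ^ 2) Q := (hYm2 i).integrable_sq
    have : ∫ ω', Y i ω' ^ 2 ∂Q ≤ ∫ _ω', (C / n) ^ 2 ∂Q := by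
      refine integral_mono_ae hint (integrable_const _) ?_
      filter_upwards [hYbdd i] with ω' hω'
      calc Y i ω' ^ 2 = |Y i ω'| ^ 2 := (sq_abs _).symm
        _ ≤ (C / n) ^ 2 := pow_le_pow_left₀ (abs_nonneg _) hω' 2
    simpa using this
  -- variance of the sum
  have hsum_var : variance (fun ω' => ∑ i, Y i ω') Q = ∑ i : Fin n, variance (Y i) Q := by
    have : (fun ω' => ∑ i, Y i ω') = ∑ i : Fin n, Y i := by
      ext ω'; simp
    rw [this]
    exact IndepFun.variance_sum (fun i _ => hYm2 i)
      (fun i _ j _ hij => hindep.indepFun hij)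
  have hfinal : variance X P ≤ C ^ 2 / n := by
    rw [hXsum.variance_eq, hsum_var]
    calc ∑ i : Fin n, variance (Y i) Q ≤ ∑ _i : Fin n, (C / n) ^ 2 :=
          Finset.sum_le_sum (fun i _ => hvarY i)
      _ = n * (C / n) ^ 2 := by simp [mul_comm]
      _ = C ^ 2 / n := by field_simp
  linarith
end

section
/- Define g(y) = ( −e^{−y}·Φ(y−1) + e^{y}·(1 − Φ(y+1)) ) / ( e^{−y}·Φ(y−1) + e^{y}·(1 − Φ(y+1)) ) for y ∈ ℝ, where Φ is the standard normal CDF. Then g is bounded on ℝ, |g(y)| < 1 for all y, and lim_{y→+∞} g(y) = −1 and lim_{y→−∞} g(y) = 1. -/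
open MeasureTheory Real Filter Set

noncomputable def gpdf (x : ℝ) : ℝ := (2 * π)⁻¹ ^ ((1:ℝ)/2) * Real.exp (-x ^ 2 / 2)

lemma gpdf_pos (x : ℝ) : 0 < gpdf x := by
  have h : (0:ℝ) < 2 * π := by positivity
  unfold gpdf
  positivity

lemma gpdf_even (x : ℝ) : gpdf (-x) = gpdf x := by
  simp [gpdf, neg_pow]

lemma gpdf_integrable : Integrable gpdf := by
  have h : Integrable (fun x : ℝ => Real.exp (-(1/2 : ℝ) * x ^ 2)) :=
    integrable_exp_neg_mul_sq (by norm_num)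
  have h2 := h.const_mul ((2 * π)⁻¹ ^ ((1:ℝ)/2))
  refine h2.congr (Filter.Eventually.of_forall fun x => ?_)
  unfold gpdf
  ring_nf

lemma gpdf_total : ∫ x, gpdf x = 1 := by
  have h := integral_gaussian (1/2 : ℝ)
  have h1 : ∫ x : ℝ, Real.exp (-x ^ 2 / 2) = Real.sqrt (2 * π) := by
    have heq : ∀ x : ℝ, -x ^ 2 / 2 = -(1/2) * x ^ 2 := fun x => by ring
    simp_rw [heq, h]
    rw [show π / (1/2 : ℝ) = 2 * π by ring]
  have hc : ((2 * π)⁻¹ : ℝ) ^ ((1:ℝ)/2) * Real.sqrt (2 * π) = 1 := by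
    rw [Real.sqrt_eq_rpow, ← Real.mul_rpow (by positivity) (by positivity),
      inv_mul_cancel₀ (by positivity), Real.one_rpow]
  calc ∫ x, gpdf x = (2 * π)⁻¹ ^ ((1:ℝ)/2) * ∫ x : ℝ, Real.exp (-x ^ 2 / 2) := by
        unfold gpdf; exact integral_const_mul _ _
    _ = 1 := by rw [h1]; exact hc

noncomputable def phi (y : ℝ) : ℝ := ∫ x in Iic y, gpdf x

lemma phi_pos (y : ℝ) : 0 < phi y := by
  rw [phi, setIntegral_pos_iff_support_of_nonneg_ae
    (Filter.Eventually.of_forall fun x => (gpdf_pos x).le) gpdf_integrable.integrableOn]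
  have : Function.support gpdf = univ := by
    ext x; simp [(gpdf_pos x).ne']
  rw [this, univ_inter]
  simp [Real.volume_Iic]

lemma tail_pos (y : ℝ) : 0 < ∫ x in Ioi y, gpdf x := by
  rw [setIntegral_pos_iff_support_of_nonneg_ae
    (Filter.Eventually.of_forall fun x => (gpdf_pos x).le) gpdf_integrable.integrableOn]
  have : Function.support gpdf = univ := by
    ext x; simp [(gpdf_pos x).ne']
  rw [this, univ_inter]
  simp [Real.volume_Ioi]

lemma phi_add_tail (y : ℝ) : phi y + ∫ x in Ioi y, gpdf x = 1 := by
  rw [phi, intervalIntegral.integral_Iic_add_Ioi gpdf_integrable.integrableOn gpdf_integrable.integrableOn,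
    gpdf_total]

lemma phi_lt_one (y : ℝ) : phi y < 1 := by
  have := phi_add_tail y
  have := tail_pos y
  linarith

lemma phi_mono {y z : ℝ} (h : y ≤ z) : phi y ≤ phi z := by
  refine setIntegral_mono_set gpdf_integrable.integrableOn
    (Filter.Eventually.of_forall fun x => (gpdf_pos x).le)
    (HasSubset.Subset.eventuallyLE (Iic_subset_Iic.mpr h))

lemma phi_neg (y : ℝ) : phi (-y) = 1 - phi y := by
  have h1 : phi (-y) = ∫ x in Ioi y, gpdf x := by
    rw [phi]
    have := integral_comp_neg_Iic (-y) gpdf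
    simp only [neg_neg] at this
    rw [← this]
    congr 1; funext x; exact (gpdf_even x).symm
  rw [h1, ← phi_add_tail y]; ring

lemma tail_bound {t : ℝ} (ht : 6 ≤ t) : (∫ x in Ioi t, gpdf x) ≤ Real.exp (-(3 * t)) / 3 := by
  have hint3 : IntegrableOn (fun x : ℝ => Real.exp (-(3 * x))) (Ioi t) := by
    have := exp_neg_integrableOn_Ioi t (by norm_num : (0:ℝ) < 3)
    simpa using this
  have hle : ∀ x ∈ Ioi t, gpdf x ≤ Real.exp (-(3 * x)) := by
    intro x hx
    have hx6 : (6:ℝ) ≤ x := le_trans ht (le_of_lt hx)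
    have hc1 : ((2 * π)⁻¹ : ℝ) ^ ((1:ℝ)/2) ≤ 1 := by
      apply Real.rpow_le_one (by positivity) _ (by norm_num)
      rw [inv_le_one_iff₀]
      right
      nlinarith [Real.pi_gt_three]
    have hexp : Real.exp (-x ^ 2 / 2) ≤ Real.exp (-(3 * x)) := by
      apply Real.exp_le_exp.mpr
      nlinarith
    calc gpdf x ≤ 1 * Real.exp (-x ^ 2 / 2) :=
          mul_le_mul_of_nonneg_right hc1 (Real.exp_pos _).le
      _ = Real.exp (-x ^ 2 / 2) := one_mul _
      _ ≤ Real.exp (-(3 * x)) := hexp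
  have h1 : (∫ x in Ioi t, gpdf x) ≤ ∫ x in Ioi t, Real.exp (-(3 * x)) :=
    setIntegral_mono_on gpdf_integrable.integrableOn hint3 measurableSet_Ioi hle
  have h2 : (∫ x in Ioi t, Real.exp (-(3 * x))) = Real.exp (-(3 * t)) / 3 := by
    have := integral_comp_mul_left_Ioi (fun u : ℝ => Real.exp (-u)) t
      (by norm_num : (0:ℝ) < 3)
    simp only [smul_eq_mul] at this
    rw [this, integral_exp_neg_Ioi]
    ring
  linarith

theorem conditional_mean_function_bounded
    (Φ : ℝ → ℝ)
    (hΦ : ∀ y : ℝ, Φ y = ∫ x in Set.Iic y, (2 * π)⁻¹ ^ ((1:ℝ)/2) * Real.exp (-x ^ 2 / 2))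
    (g : ℝ → ℝ)
    (hg : ∀ y : ℝ, g y =
      (-Real.exp (-y) * Φ (y - 1) + Real.exp y * (1 - Φ (y + 1)))
        / (Real.exp (-y) * Φ (y - 1) + Real.exp y * (1 - Φ (y + 1)))) :
    (∃ C : ℝ, ∀ y : ℝ, |g y| ≤ C) ∧
    (∀ y : ℝ, |g y| < 1) ∧
    Tendsto g atTop (nhds (-1)) ∧
    Tendsto g atBot (nhds 1) := by
  have hphi : ∀ y, Φ y = phi y := fun y => hΦ y
  set a : ℝ → ℝ := fun y => Real.exp (-y) * phi (y - 1) with ha_def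
  set b : ℝ → ℝ := fun y => Real.exp y * (1 - phi (y + 1)) with hb_def
  have ha : ∀ y, 0 < a y := fun y =>
    mul_pos (Real.exp_pos _) (phi_pos _)
  have hb : ∀ y, 0 < b y := fun y =>
    mul_pos (Real.exp_pos _) (by linarith [phi_lt_one (y + 1)])
  have hg' : ∀ y, g y = (b y - a y) / (a y + b y) := by
    intro y
    rw [hg y, hphi, hphi]
    simp only [ha_def, hb_def]
    ring_nf
  -- strict bound
  have habs : ∀ y, |g y| < 1 := by
    intro y
    rw [hg' y, abs_div, abs_of_pos (by linarith [ha y, hb y] : 0 < a y + b y),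
      div_lt_one (by linarith [ha y, hb y])]
    exact abs_lt.mpr ⟨by linarith [ha y, hb y], by linarith [ha y, hb y]⟩
  have htop : Tendsto g atTop (nhds (-1)) := by
    have hr0 : Tendsto (fun y => b y / a y) atTop (nhds 0) := by
      have hub : Tendsto (fun y : ℝ => Real.exp (-(y + 3)) / (3 * phi 0)) atTop (nhds 0) := by
        have h1 : Tendsto (fun y : ℝ => -(y + 3)) atTop atBot := by
          apply tendsto_neg_atBot_iff.mpr
          exact tendsto_atTop_add_const_right _ 3 tendsto_id
        have := (Real.tendsto_exp_atBot.comp h1).div_const (3 * phi 0)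
        simpa using this
      apply tendsto_of_tendsto_of_tendsto_of_le_of_le' tendsto_const_nhds hub
      · exact Filter.Eventually.of_forall fun y => (div_pos (hb y) (ha y)).le
      · filter_upwards [eventually_ge_atTop (7 : ℝ)] with y hy
        have hbub : b y ≤ Real.exp y * (Real.exp (-(3 * (y + 1))) / 3) := by
          have : 1 - phi (y + 1) = ∫ x in Ioi (y + 1), gpdf x := by
            have := phi_add_tail (y + 1); linarith
          rw [hb_def]
          simp only
          rw [this]
          exact mul_le_mul_of_nonneg_left (tail_bound (by linarith)) (Real.exp_pos _).le
        have halb : Real.exp (-y) * phi 0 ≤ a y := by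
          rw [ha_def]
          exact mul_le_mul_of_nonneg_left (phi_mono (by linarith)) (Real.exp_pos _).le
        have hphi0 : 0 < phi 0 := phi_pos 0
        have key : b y / a y ≤ b y / (Real.exp (-y) * phi 0) :=
          div_le_div_of_nonneg_left (hb y).le (by positivity) halb
        refine key.trans ?_
        rw [div_le_div_iff₀ (by positivity) (by positivity)]
        calc b y * (3 * phi 0) ≤ (Real.exp y * (Real.exp (-(3 * (y + 1))) / 3)) * (3 * phi 0) := by
              apply mul_le_mul_of_nonneg_right hbub (by positivity)
          _ = (Real.exp y * Real.exp (-(3 * (y + 1)))) * phi 0 := by ring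
          _ = (Real.exp (-(y + 3)) * Real.exp (-y)) * phi 0 := by
              rw [← Real.exp_add, ← Real.exp_add]; ring_nf
          _ = Real.exp (-(y + 3)) * (Real.exp (-y) * phi 0) := by ring
    have hgy : ∀ y : ℝ, g y = (b y / a y - 1) / (1 + b y / a y) := by
      intro y
      have hane : a y ≠ 0 := (ha y).ne'
      have hab : (0:ℝ) < a y + b y := by linarith [ha y, hb y]
      have hdiv : (0:ℝ) < b y / a y := div_pos (hb y) (ha y)
      have hden : (0:ℝ) < 1 + b y / a y := by linarith
      rw [hg' y, div_eq_div_iff hab.ne' hden.ne']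
      field_simp
    have := Tendsto.div ((hr0.sub_const 1)) (hr0.const_add 1) (by norm_num)
    have hlim : Tendsto (fun y => (b y / a y - 1) / (1 + b y / a y)) atTop (nhds (-1)) := by
      convert this using 2
      all_goals norm_num
    exact hlim.congr (fun y => (hgy y).symm)
  have hsym : ∀ y : ℝ, g (-y) = - g y := by
    intro y
    rw [hg' y, hg' (-y)]
    have h1 : a (-y) = b y := by
      simp only [ha_def, hb_def]
      rw [neg_neg, show -y - 1 = -(y + 1) by ring, phi_neg]
    have h2 : b (-y) = a y := by
      simp only [ha_def, hb_def]
      rw [show -y + 1 = -(y - 1) by ring, phi_neg]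
      ring_nf
    rw [h1, h2, show b y + a y = a y + b y from add_comm _ _, ← neg_div]
    ring_nf
  have hbot : Tendsto g atBot (nhds 1) := by
    have h3 : Tendsto (fun y : ℝ => g (-y)) atBot (nhds (-1)) :=
      htop.comp tendsto_neg_atBot_atTop
    have h4 : Tendsto (fun y : ℝ => -(g (-y))) atBot (nhds 1) := by
      have := h3.neg
      simpa using this
    refine h4.congr fun y => ?_
    rw [hsym y, neg_neg]
  exact ⟨⟨1, fun y => (habs y).le⟩, habs, htop, hbot⟩
end

section
/- Let γ ∈ (0,1/2). There exist finite constants 0 < c ≤ c̃ < ∞, independent of γ and x, such that for all x ∈ ℝ: c·|x|^{1/(1−γ)}/(1/2 − γ) ≤ ∫₀^∞ min(|x·γ·t^{γ−1}|, |x·γ·t^{γ−1}|²) dt ≤ c̃·|x|^{1/(1−γ)}/(1/2 − γ). -/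
open MeasureTheory Set

lemma frac_key (γ : ℝ) (h0 : 0 < γ) (h2 : γ < 1/2) (A : ℝ) (hA : 0 < A) :
    ∫ t in Set.Ioi (0:ℝ), min (A * t ^ (γ - 1)) ((A * t ^ (γ - 1)) ^ 2)
      = A ^ (1/(1-γ)) * (1/γ + 1/(1-2*γ)) := by
  have h1γ : (0:ℝ) < 1 - γ := by linarith
  have h12 : (0:ℝ) < 1 - 2*γ := by linarith
  set T : ℝ := A ^ (1/(1-γ)) with hTdef
  have hT : 0 < T := Real.rpow_pos_of_pos hA _
  have hTγ1 : T ^ (γ - 1) = A⁻¹ := by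
    rw [hTdef, ← Real.rpow_mul hA.le]
    have : 1 / (1 - γ) * (γ - 1) = -1 := by field_simp; ring
    rw [this, Real.rpow_neg_one]
  have hATγ : A * T ^ (γ - 1) = 1 := by
    rw [hTγ1, mul_inv_cancel₀ hA.ne']
  have hmin1 : ∀ t ∈ Ioc (0:ℝ) T,
      min (A * t ^ (γ - 1)) ((A * t ^ (γ - 1)) ^ 2) = A * t ^ (γ - 1) := by
    intro t ht
    have htp : 0 < t := ht.1
    have h1le : (1:ℝ) ≤ A * t ^ (γ - 1) := by
      have h := Real.rpow_le_rpow_of_nonpos htp ht.2 (by linarith : γ - 1 ≤ 0)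
      calc (1:ℝ) = A * T ^ (γ - 1) := hATγ.symm
        _ ≤ A * t ^ (γ - 1) := by nlinarith
    have : A * t ^ (γ - 1) ≤ (A * t ^ (γ - 1)) ^ 2 := by nlinarith
    exact min_eq_left this
  have hmin2 : ∀ t ∈ Ioi T,
      min (A * t ^ (γ - 1)) ((A * t ^ (γ - 1)) ^ 2) = (A * t ^ (γ - 1)) ^ 2 := by
    intro t ht
    have htp : 0 < t := hT.trans ht
    have hle1 : A * t ^ (γ - 1) ≤ 1 := by
      have h := Real.rpow_le_rpow_of_nonpos hT (le_of_lt ht) (by linarith : γ - 1 ≤ 0)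
      calc A * t ^ (γ - 1) ≤ A * T ^ (γ - 1) := by nlinarith
        _ = 1 := hATγ
    have hpos : 0 ≤ A * t ^ (γ - 1) :=
      mul_nonneg hA.le (Real.rpow_nonneg htp.le _)
    have : (A * t ^ (γ - 1)) ^ 2 ≤ A * t ^ (γ - 1) := by nlinarith
    exact min_eq_right this
  have int1 : IntegrableOn (fun t => A * t ^ (γ - 1)) (Ioc (0:ℝ) T) := by
    have := (intervalIntegral.intervalIntegrable_rpow' (a := 0) (b := T)
      (r := γ - 1) (by linarith)).1
    exact this.const_mul A
  have sq_eq : ∀ t ∈ Ioi T, (A * t ^ (γ - 1)) ^ 2 = A^2 * t ^ (2*γ - 2) := by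
    intro t ht
    have htp : 0 < t := hT.trans ht
    have h2 : (t ^ (γ-1))^2 = t ^ (2*γ-2) := by
      rw [← Real.rpow_natCast (t ^ (γ-1)) 2, ← Real.rpow_mul htp.le]
      congr 1
      push_cast
      ring
    rw [mul_pow, h2]
  have int2 : IntegrableOn (fun t => (A * t ^ (γ - 1)) ^ 2) (Ioi T) := by
    have h : IntegrableOn (fun t : ℝ => t ^ (2*γ - 2)) (Ioi T) :=
      integrableOn_Ioi_rpow_of_lt (by linarith) hT
    exact IntegrableOn.congr_fun (h.const_mul (A^2))
      (fun t ht => (sq_eq t ht).symm) measurableSet_Ioi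
  have intm1 : IntegrableOn
      (fun t => min (A * t ^ (γ - 1)) ((A * t ^ (γ - 1)) ^ 2)) (Ioc (0:ℝ) T) :=
    int1.congr_fun (fun t ht => (hmin1 t ht).symm) measurableSet_Ioc
  have intm2 : IntegrableOn
      (fun t => min (A * t ^ (γ - 1)) ((A * t ^ (γ - 1)) ^ 2)) (Ioi T) :=
    int2.congr_fun (fun t ht => (hmin2 t ht).symm) measurableSet_Ioi
  have hsplit : ∫ t in Set.Ioi (0:ℝ), min (A * t ^ (γ - 1)) ((A * t ^ (γ - 1)) ^ 2)
      = (∫ t in Ioc (0:ℝ) T, min (A * t ^ (γ - 1)) ((A * t ^ (γ - 1)) ^ 2))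
        + ∫ t in Ioi T, min (A * t ^ (γ - 1)) ((A * t ^ (γ - 1)) ^ 2) := by
    rw [← Ioc_union_Ioi_eq_Ioi hT.le,
      setIntegral_union (Set.Ioc_disjoint_Ioi le_rfl) measurableSet_Ioi intm1 intm2]
  have hI1 : ∫ t in Ioc (0:ℝ) T, min (A * t ^ (γ - 1)) ((A * t ^ (γ - 1)) ^ 2)
      = A * (T ^ γ / γ) := by
    rw [setIntegral_congr_fun measurableSet_Ioc hmin1,
      ← intervalIntegral.integral_of_le hT.le, intervalIntegral.integral_const_mul,
      integral_rpow (Or.inl (by linarith))]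
    rw [Real.zero_rpow (by intro h; apply h0.ne'; linarith : γ - 1 + 1 ≠ 0)]
    have : γ - 1 + 1 = γ := by ring
    rw [this]
    ring
  have hI2 : ∫ t in Ioi T, min (A * t ^ (γ - 1)) ((A * t ^ (γ - 1)) ^ 2)
      = A^2 * (T ^ (2*γ - 1) / (1 - 2*γ)) := by
    rw [setIntegral_congr_fun measurableSet_Ioi hmin2,
      setIntegral_congr_fun measurableSet_Ioi sq_eq, MeasureTheory.integral_const_mul,
      integral_Ioi_rpow_of_lt (by linarith) hT]
    have h21 : 2*γ - 2 + 1 = 2*γ - 1 := by ring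
    rw [h21]
    have hne : 2*γ - 1 ≠ 0 := by linarith
    have hne2 : 1 - 2*γ ≠ 0 := by linarith
    field_simp
    ring
  rw [hsplit, hI1, hI2]
  have e1 : A * T ^ γ = A ^ (1/(1-γ)) := by
    rw [hTdef, ← Real.rpow_mul hA.le,
      ← Real.rpow_one_add' hA.le (by positivity : 1 + 1/(1-γ)*γ ≠ 0)]
    congr 1
    field_simp
    ring
  have e2 : A^2 * T ^ (2*γ - 1) = A ^ (1/(1-γ)) := by
    rw [hTdef, ← Real.rpow_mul hA.le, ← Real.rpow_natCast A 2,
      ← Real.rpow_add hA]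
    congr 1
    push_cast
    field_simp
    ring
  calc A * (T ^ γ / γ) + A^2 * (T ^ (2*γ-1) / (1-2*γ))
      = (A * T ^ γ) * (1/γ) + (A^2 * T ^ (2*γ-1)) * (1/(1-2*γ)) := by ring
    _ = A ^ (1/(1-γ)) * (1/γ + 1/(1-2*γ)) := by rw [e1, e2]; ring

lemma frac_q_bounds (γ : ℝ) (h0 : 0 < γ) (h2 : γ < 1/2) :
    1/4 ≤ γ ^ (γ/(1-γ)) ∧ γ ^ (γ/(1-γ)) ≤ 1 := by
  have h1γ : (0:ℝ) < 1 - γ := by linarith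
  constructor
  · -- lower bound via exp
    have hlog : Real.log γ < 0 := Real.log_neg h0 (by linarith)
    have hkey : γ * Real.log γ ≥ -(Real.exp 1)⁻¹ := by
      -- γ log γ ≥ -1/e
      have h1 : Real.log (1/γ) ≤ (1/γ) / Real.exp 1 := by
        have := Real.log_le_sub_one_of_pos (x := (1/γ) / Real.exp 1) (by positivity)
        have hlogdiv : Real.log ((1/γ) / Real.exp 1) = Real.log (1/γ) - 1 := by
          rw [Real.log_div (by positivity) (by positivity), Real.log_exp]
        linarith [hlogdiv ▸ this]
      have hloginv : Real.log (1/γ) = -Real.log γ := by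
        rw [one_div, Real.log_inv]
      rw [hloginv] at h1
      have hγe : γ * (-Real.log γ) ≤ γ * ((1/γ)/Real.exp 1) :=
        mul_le_mul_of_nonneg_left h1 h0.le
      have : γ * ((1/γ)/Real.exp 1) = (Real.exp 1)⁻¹ := by
        field_simp
      nlinarith
    have hs : γ/(1-γ) * Real.log γ ≥ -1 := by
      have hfrac : γ/(1-γ) ≤ 2*γ := by
        rw [div_le_iff₀ h1γ]
        nlinarith
      have hfrac2 : γ/(1-γ) * Real.log γ ≥ 2*γ * Real.log γ := by
        nlinarith [hlog]
      have he2 : (2:ℝ) ≤ Real.exp 1 := by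
        have := Real.add_one_le_exp (1:ℝ)
        linarith
      have hei : (Real.exp 1)⁻¹ ≤ 1/2 := by
        rw [inv_le_comm₀ ( by positivity) (by norm_num)]
        simpa using he2
      nlinarith
    rw [Real.rpow_def_of_pos h0]
    calc (1:ℝ)/4 ≤ Real.exp (-1) := by
          rw [Real.exp_neg]
          rw [le_inv_comm₀ (by norm_num) (Real.exp_pos 1)]
          calc Real.exp 1 ≤ 2.7182818286 := Real.exp_one_lt_d9.le
            _ ≤ ((1:ℝ)/4)⁻¹ := by norm_num
      _ ≤ Real.exp (γ/(1-γ) * Real.log γ) := Real.exp_le_exp.mpr (by linarith)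
      _ = Real.exp (Real.log γ * (γ/(1-γ))) := by ring_nf
  · exact Real.rpow_le_one h0.le (by linarith) (by positivity)

theorem frac_kernel_integral_uniform_bounds :
    ∃ c ctil : ℝ, 0 < c ∧ c ≤ ctil ∧
      ∀ γ : ℝ, 0 < γ → γ < 1/2 → ∀ x : ℝ,
        c * |x| ^ (1 / (1 - γ)) / (1/2 - γ)
          ≤ ∫ t in Set.Ioi (0:ℝ),
              min |x * (γ * t ^ (γ - 1))| (|x * (γ * t ^ (γ - 1))| ^ 2) ∧
        ∫ t in Set.Ioi (0:ℝ),
            min |x * (γ * t ^ (γ - 1))| (|x * (γ * t ^ (γ - 1))| ^ 2)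
          ≤ ctil * |x| ^ (1 / (1 - γ)) / (1/2 - γ) := by
  refine ⟨1/16, 1/2, by norm_num, by norm_num, ?_⟩
  intro γ h0 h2 x
  have h1γ : (0:ℝ) < 1 - γ := by linarith
  have h12 : (0:ℝ) < 1 - 2*γ := by linarith
  have hD : (0:ℝ) < 1/2 - γ := by linarith
  by_cases hx : x = 0
  · subst hx
    have hz : |(0:ℝ)| ^ (1/(1-γ)) = 0 := by
      rw [abs_zero, Real.zero_rpow (by positivity : 1/(1-γ) ≠ 0)]
    rw [hz]
    simp
  · have hA : 0 < |x| * γ := by positivity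
    have heq : (∫ t in Set.Ioi (0:ℝ),
          min |x * (γ * t ^ (γ - 1))| (|x * (γ * t ^ (γ - 1))| ^ 2))
        = ∫ t in Set.Ioi (0:ℝ),
            min ((|x| * γ) * t ^ (γ - 1)) (((|x| * γ) * t ^ (γ - 1)) ^ 2) := by
      apply setIntegral_congr_fun measurableSet_Ioi
      intro t ht
      have htp : 0 < t := ht
      have habs : |x * (γ * t ^ (γ - 1))| = (|x| * γ) * t ^ (γ - 1) := by
        rw [abs_mul, abs_mul, abs_of_pos h0,
          abs_of_pos (Real.rpow_pos_of_pos htp _)]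
        ring
      simp only [habs]
    rw [heq, frac_key γ h0 h2 _ hA]
    set q := γ ^ (γ/(1-γ)) with hqdef
    set P := |x| ^ (1/(1-γ)) with hPdef
    have hP : 0 < P := Real.rpow_pos_of_pos (abs_pos.mpr hx) _
    obtain ⟨hq1, hq2⟩ := frac_q_bounds γ h0 h2
    rw [← hqdef] at hq1 hq2
    have hγβ : γ ^ (1/(1-γ)) = q * γ := by
      rw [hqdef, ← Real.rpow_add_one h0.ne' (γ/(1-γ))]
      congr 1
      field_simp
      ring
    have hkey : (|x| * γ) ^ (1/(1-γ)) * (1/γ + 1/(1-2*γ))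
        = P * q * ((1-γ)/(1-2*γ)) := by
      rw [Real.mul_rpow (abs_nonneg x) h0.le, hγβ]
      have hsum : γ * (1/γ + 1/(1-2*γ)) = (1-γ)/(1-2*γ) := by
        field_simp [h12.ne', show (1:ℝ) - γ*2 ≠ 0 by linarith]
        ring
      calc P * (q*γ) * (1/γ + 1/(1-2*γ))
          = P * q * (γ * (1/γ + 1/(1-2*γ))) := by ring
        _ = P * q * ((1-γ)/(1-2*γ)) := by rw [hsum]
    rw [hkey]
    have hrr : (1-γ)/(1-2*γ) * (1/2-γ) = (1-γ)/2 := by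
      field_simp [h12.ne', show (1:ℝ) - γ*2 ≠ 0 by linarith]
    constructor
    · rw [div_le_iff₀ hD]
      have : P * q * ((1-γ)/(1-2*γ)) * (1/2-γ) = P * q * ((1-γ)/2) := by
        rw [mul_assoc (P*q), hrr]
      rw [this]
      have hq4 : 1/16 ≤ q * ((1-γ)/2) := by nlinarith
      calc 1/16 * P = (1/16) * P := by ring
        _ ≤ (q * ((1-γ)/2)) * P := mul_le_mul_of_nonneg_right hq4 hP.le
        _ = P * q * ((1-γ)/2) := by ring
    · rw [le_div_iff₀ hD]
      have : P * q * ((1-γ)/(1-2*γ)) * (1/2-γ) = P * q * ((1-γ)/2) := by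
        rw [mul_assoc (P*q), hrr]
      rw [this]
      have hq5 : q * ((1-γ)/2) ≤ 1/2 := by nlinarith
      calc P * q * ((1-γ)/2) = (q * ((1-γ)/2)) * P := by ring
        _ ≤ (1/2) * P := mul_le_mul_of_nonneg_right hq5 hP.le
end

section
/- Let γ > 0 and let ρ be a measure on ℝ with ∫ min(1,x²)ρ(dx) < ∞. If ∫_{−∞}^0 ∫_ℝ min(1, |((1−s)^γ − (−s)^γ)·x|²) ρ(dx) ds < ∞, then ∫_{|γx|>1} (|γx|^{1/(1−γ)} − 1) ρ(dx) < ∞; in particular, if additionally γ < 1, then ∫_{|x|>1} |x|^{1/(1−γ)} ρ(dx) < ∞. -/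
open MeasureTheory Real Set
open scoped ENNReal

-- key pointwise inequality
lemma key_ineq {γ : ℝ} (hγ : 0 < γ) (hγ1 : γ < 1) {s : ℝ} (hs : s ≤ 0) :
    γ * (1 - s) ^ (γ - 1) ≤ (1 - s) ^ γ - (-s) ^ γ := by
  set a : ℝ := -s with ha'
  have ha : 0 ≤ a := by simp only [ha']; linarith
  have hb1 : (1:ℝ) ≤ 1 - s := by linarith
  set b : ℝ := 1 - s with hb'
  have hb0 : 0 < b := by linarith
  have hab : a = b - 1 := by rw [ha', hb']; ring
  set u : ℝ := a / b with hu'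
  have hu0 : 0 ≤ u := div_nonneg ha hb0.le
  have hgm := Real.geom_mean_le_arith_mean2_weighted hγ.le (by linarith : (0:ℝ) ≤ 1 - γ)
      hu0 zero_le_one (by ring)
  rw [Real.one_rpow, mul_one] at hgm
  -- hgm : u ^ γ ≤ γ * u + (1 - γ) * 1
  have hau : a = u * b := by rw [hu', div_mul_cancel₀ a hb0.ne']
  have h1 : (-s) ^ γ = u ^ γ * b ^ γ := by
    rw [ha'.symm] at *
    rw [hau, Real.mul_rpow hu0 hb0.le]
  have h2 : γ * b ^ (γ - 1) = γ * (1 - u) * b ^ γ := by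
    have : 1 - u = 1 / b := by
      rw [hu', hab]; field_simp; ring
    rw [this, Real.rpow_sub hb0, Real.rpow_one]
    ring
  rw [h1, h2]
  have hbγ : 0 ≤ b ^ γ := Real.rpow_nonneg hb0.le γ
  nlinarith [hbγ, hgm]

lemma meas_F (γ x : ℝ) : Measurable fun s : ℝ =>
    ENNReal.ofReal (min 1 (|((1 - s) ^ γ - (-s) ^ γ) * x| ^ 2)) := by
  fun_prop

lemma meas_F2 (γ : ℝ) : Measurable fun p : ℝ × ℝ =>
    ENNReal.ofReal (min 1 (|((1 - p.1) ^ γ - (-p.1) ^ γ) * p.2| ^ 2)) := by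
  fun_prop

lemma inner_bound {γ : ℝ} (hγ : 0 < γ) (hγ1 : γ < 1) {x : ℝ} (hx : 1 < |γ * x|) :
    ENNReal.ofReal (|γ * x| ^ (1 / (1 - γ)) - 1) ≤
      ∫⁻ s in Set.Iic (0:ℝ), ENNReal.ofReal (min 1 (|((1 - s) ^ γ - (-s) ^ γ) * x| ^ 2)) := by
  have hcabs : |γ * x| = γ * |x| := by rw [abs_mul, abs_of_pos hγ]
  set c : ℝ := γ * |x| with hc'
  rw [hcabs] at hx
  have hc0 : 0 < c := lt_trans one_pos hx
  have hexp : 0 < 1 / (1 - γ) := by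
    have h1γ : (0:ℝ) < 1 - γ := by linarith
    positivity
  set T : ℝ := c ^ (1 / (1 - γ)) with hT'
  have hT : 1 < T := Real.one_lt_rpow_iff_of_pos hc0 |>.mpr (Or.inl ⟨hx, hexp⟩)
  have hpt : ∀ s ∈ Set.Icc (1 - T) (0:ℝ),
      (1:ℝ≥0∞) ≤ ENNReal.ofReal (min 1 (|((1 - s) ^ γ - (-s) ^ γ) * x| ^ 2)) := by
    intro s hs
    obtain ⟨hs1, hs2⟩ := hs
    have hkey := key_ineq hγ hγ1 hs2
    have h1s : (1:ℝ) ≤ 1 - s := by linarith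
    have hsT : 1 - s ≤ T := by linarith
    have hrp : T ^ (γ - 1) ≤ (1 - s) ^ (γ - 1) :=
      Real.rpow_le_rpow_of_nonpos (by linarith) hsT (by linarith)
    have hTe : T ^ (γ - 1) = c⁻¹ := by
      have hne : (1:ℝ) - γ ≠ 0 := by linarith
      rw [hT', ← Real.rpow_mul hc0.le,
        show (1 / (1 - γ)) * (γ - 1) = -1 by field_simp; ring]
      exact Real.rpow_neg_one c
    have h2 : 1 ≤ ((1 - s) ^ γ - (-s) ^ γ) * |x| := by
      have : c * T ^ (γ - 1) = 1 := by rw [hTe]; field_simp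
      have h3 : c * T ^ (γ - 1) ≤ c * (1 - s) ^ (γ - 1) :=
        mul_le_mul_of_nonneg_left hrp hc0.le
      have h4 : c * (1 - s) ^ (γ - 1) = (γ * (1 - s) ^ (γ - 1)) * |x| := by
        rw [hc']; ring
      nlinarith [abs_nonneg x]
    have h5 : (1:ℝ) ≤ |((1 - s) ^ γ - (-s) ^ γ) * x| := by
      rw [abs_mul]
      calc (1:ℝ) ≤ ((1 - s) ^ γ - (-s) ^ γ) * |x| := h2
        _ ≤ |(1 - s) ^ γ - (-s) ^ γ| * |x| :=
          mul_le_mul_of_nonneg_right (le_abs_self _) (abs_nonneg x)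
    have h6 : (1:ℝ) ≤ min 1 (|((1 - s) ^ γ - (-s) ^ γ) * x| ^ 2) :=
      le_min le_rfl (one_le_pow₀ h5)
    calc (1:ℝ≥0∞) = ENNReal.ofReal 1 := ENNReal.ofReal_one.symm
      _ ≤ _ := ENNReal.ofReal_le_ofReal h6
  calc ENNReal.ofReal (|γ * x| ^ (1 / (1 - γ)) - 1)
      = volume (Set.Icc (1 - T) (0:ℝ)) := by
        rw [Real.volume_Icc]; congr 1; rw [hcabs, ← hT']; ring
    _ = ∫⁻ _ in Set.Icc (1 - T) (0:ℝ), (1:ℝ≥0∞) := by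
        rw [setLIntegral_one]
    _ ≤ ∫⁻ s in Set.Icc (1 - T) (0:ℝ),
          ENNReal.ofReal (min 1 (|((1 - s) ^ γ - (-s) ^ γ) * x| ^ 2)) :=
        setLIntegral_mono (meas_F γ x) hpt
    _ ≤ _ := lintegral_mono_set (fun s hs => hs.2)

lemma tail_fin (ρ : Measure ℝ)
    (hlevy : ∫⁻ x, ENNReal.ofReal (min 1 (x ^ 2)) ∂ρ < ⊤)
    {ε : ℝ} (hε : 0 < ε) : ρ {x : ℝ | ε < |x|} < ⊤ := by
  set A : Set ℝ := {x : ℝ | ε < |x|} with hA'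
  set m : ℝ := min 1 (ε ^ 2) with hm'
  have hm : 0 < m := lt_min one_pos (by positivity)
  have hchain : ENNReal.ofReal m * ρ A ≤ ∫⁻ x, ENNReal.ofReal (min 1 (x ^ 2)) ∂ρ := by
    rw [← setLIntegral_const A (ENNReal.ofReal m)]
    refine le_trans (setLIntegral_mono (by fun_prop) ?_) (setLIntegral_le_lintegral A _)
    intro x hx
    refine ENNReal.ofReal_le_ofReal (min_le_min le_rfl ?_)
    have : ε ≤ |x| := le_of_lt hx
    calc ε ^ 2 ≤ |x| ^ 2 := by nlinarith [abs_nonneg x]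
      _ = x ^ 2 := sq_abs x
  have hfin2 : ENNReal.ofReal m * ρ A < ⊤ := lt_of_le_of_lt hchain hlevy
  have hm0 : ENNReal.ofReal m ≠ 0 := by
    simp [ENNReal.ofReal_eq_zero]; linarith
  by_contra h
  rw [not_lt, top_le_iff] at h
  rw [h, ENNReal.mul_top hm0] at hfin2
  exact (lt_irrefl _ hfin2)

theorem fractional_levy_necessity_tail
    (γ : ℝ) (hγ : 0 < γ)
    (ρ : Measure ℝ)
    (hlevy : ∫⁻ x, ENNReal.ofReal (min 1 (x ^ 2)) ∂ρ < ⊤)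
    (hfin : ∫⁻ s in Set.Iic (0:ℝ),
        ∫⁻ x, ENNReal.ofReal (min 1 (|((1 - s) ^ γ - (-s) ^ γ) * x| ^ 2)) ∂ρ < ⊤) :
    (∫⁻ x in {x : ℝ | 1 < |γ * x|}, ENNReal.ofReal (|γ * x| ^ (1 / (1 - γ)) - 1) ∂ρ < ⊤)
    ∧ (γ < 1 →
        ∫⁻ x in {x : ℝ | 1 < |x|}, ENNReal.ofReal (|x| ^ (1 / (1 - γ))) ∂ρ < ⊤) := by
  by_cases hγ1 : γ < 1
  swap
  · -- trivial case γ ≥ 1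
    push_neg at hγ1
    constructor
    · have h0 : ∀ x ∈ {x : ℝ | 1 < |γ * x|},
          ENNReal.ofReal (|γ * x| ^ (1 / (1 - γ)) - 1) ≤ (0:ℝ≥0∞) := by
        intro x hx
        have hx1 : (1:ℝ) ≤ |γ * x| := le_of_lt hx
        have hexp : 1 / (1 - γ) ≤ 0 := by
          rcases eq_or_lt_of_le hγ1 with h | h
          · simp [← h]
          · apply div_nonpos_of_nonneg_of_nonpos <;> linarith
        have : |γ * x| ^ (1 / (1 - γ)) ≤ 1 :=
          Real.rpow_le_one_of_one_le_of_nonpos hx1 hexp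
        rw [one_div] at this
        simp [ENNReal.ofReal_eq_zero]; rw [← abs_mul]; linarith
      calc ∫⁻ x in {x : ℝ | 1 < |γ * x|}, ENNReal.ofReal (|γ * x| ^ (1 / (1 - γ)) - 1) ∂ρ
          ≤ ∫⁻ _ in {x : ℝ | 1 < |γ * x|}, (0:ℝ≥0∞) ∂ρ := setLIntegral_mono measurable_const h0
        _ = 0 := by simp
        _ < ⊤ := by simp
    · intro h; exact absurd h (not_lt.mpr hγ1)
  -- main case γ < 1
  have h1γ : (0:ℝ) < 1 - γ := by linarith
  have hp : 0 < 1 / (1 - γ) := by positivity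
  set S : Set ℝ := {x : ℝ | 1 < |γ * x|} with hS'
  have hS : MeasurableSet S := by
    have : Measurable fun x : ℝ => |γ * x| := by fun_prop
    exact measurableSet_lt measurable_const this
  have hρS : ρ S < ⊤ := by
    have : S = {x : ℝ | γ⁻¹ < |x|} := by
      ext x
      simp only [hS', Set.mem_setOf_eq, abs_mul, abs_of_pos hγ]
      rw [inv_eq_one_div, div_lt_iff₀' hγ]
    rw [this]
    exact tail_fin ρ hlevy (by positivity)
  haveI hfinS : IsFiniteMeasure (ρ.restrict S) :=
    ⟨by rwa [Measure.restrict_apply_univ]⟩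
  -- Part A
  have partA : ∫⁻ x in S, ENNReal.ofReal (|γ * x| ^ (1 / (1 - γ)) - 1) ∂ρ < ⊤ := by
    have hswap :
        ∫⁻ x, (∫⁻ s in Set.Iic (0:ℝ),
            ENNReal.ofReal (min 1 (|((1 - s) ^ γ - (-s) ^ γ) * x| ^ 2))) ∂(ρ.restrict S)
          = ∫⁻ s in Set.Iic (0:ℝ), ∫⁻ x,
            ENNReal.ofReal (min 1 (|((1 - s) ^ γ - (-s) ^ γ) * x| ^ 2)) ∂(ρ.restrict S) := by
      exact (lintegral_lintegral_swap ((meas_F2 γ).aemeasurable)).symm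
    calc ∫⁻ x in S, ENNReal.ofReal (|γ * x| ^ (1 / (1 - γ)) - 1) ∂ρ
        ≤ ∫⁻ x in S, (∫⁻ s in Set.Iic (0:ℝ),
            ENNReal.ofReal (min 1 (|((1 - s) ^ γ - (-s) ^ γ) * x| ^ 2))) ∂ρ := by
          refine setLIntegral_mono ?_ ?_
          · exact (meas_F2 γ).lintegral_prod_left'
          · intro x hx
            exact inner_bound hγ hγ1 hx
      _ = ∫⁻ s in Set.Iic (0:ℝ), ∫⁻ x,
            ENNReal.ofReal (min 1 (|((1 - s) ^ γ - (-s) ^ γ) * x| ^ 2)) ∂(ρ.restrict S) :=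
          hswap
      _ ≤ ∫⁻ s in Set.Iic (0:ℝ), ∫⁻ x,
            ENNReal.ofReal (min 1 (|((1 - s) ^ γ - (-s) ^ γ) * x| ^ 2)) ∂ρ := by
          exact lintegral_mono fun s => setLIntegral_le_lintegral _ _
      _ < ⊤ := hfin
  refine ⟨partA, fun _ => ?_⟩
  -- Part B
  set p : ℝ := 1 / (1 - γ) with hp'
  set C : ℝ≥0∞ := ENNReal.ofReal (γ⁻¹ ^ p) with hC'
  have hCt : C < ⊤ := ENNReal.ofReal_lt_top
  have hg : Measurable fun x : ℝ => ENNReal.ofReal (|γ * x| ^ p - 1) := by fun_prop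
  have hpt : ∀ x ∈ {x : ℝ | 1 < |x|},
      ENNReal.ofReal (|x| ^ p) ≤ C + C * ENNReal.ofReal (|γ * x| ^ p - 1) := by
    intro x _
    have hax : (0:ℝ) ≤ |x| := abs_nonneg x
    by_cases h : 1 < |γ * x|
    · have h1 : |γ * x| ^ p = γ ^ p * |x| ^ p := by
        rw [abs_mul, abs_of_pos hγ, Real.mul_rpow hγ.le hax]
      have h2 : γ⁻¹ ^ p * γ ^ p = 1 := by
        rw [← Real.mul_rpow (by positivity) hγ.le, inv_mul_cancel₀ hγ.ne', Real.one_rpow]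
      have hsplit : |x| ^ p = γ⁻¹ ^ p + γ⁻¹ ^ p * (|γ * x| ^ p - 1) := by
        rw [h1]; linear_combination -(|x| ^ p) * h2
      have hnn : (0:ℝ) ≤ γ⁻¹ ^ p * (|γ * x| ^ p - 1) := by
        have : (1:ℝ) ≤ |γ * x| ^ p := Real.one_le_rpow h.le hp.le
        have h3 : (0:ℝ) ≤ γ⁻¹ ^ p := Real.rpow_nonneg (by positivity) p
        nlinarith
      rw [hsplit, ENNReal.ofReal_add (Real.rpow_nonneg (by positivity) p) hnn,
        ENNReal.ofReal_mul (Real.rpow_nonneg (by positivity) p)]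
    · push_neg at h
      have hxle : |x| ≤ γ⁻¹ := by
        rw [abs_mul, abs_of_pos hγ] at h
        rw [← one_div]
        rw [le_div_iff₀ hγ]
        linarith [mul_comm γ |x|]
      calc ENNReal.ofReal (|x| ^ p) ≤ C :=
            ENNReal.ofReal_le_ofReal (Real.rpow_le_rpow hax hxle hp.le)
        _ ≤ C + C * ENNReal.ofReal (|γ * x| ^ p - 1) := le_self_add
  have hSg : ∫⁻ x, ENNReal.ofReal (|γ * x| ^ p - 1) ∂ρ < ⊤ := by
    rw [← lintegral_add_compl _ hS]
    have hz : ∫⁻ x in Sᶜ, ENNReal.ofReal (|γ * x| ^ p - 1) ∂ρ = 0 := by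
      have hle : ∀ x ∈ Sᶜ, ENNReal.ofReal (|γ * x| ^ p - 1) ≤ (0:ℝ≥0∞) := by
        intro x hx
        simp only [hS', Set.mem_compl_iff, Set.mem_setOf_eq, not_lt] at hx
        have : |γ * x| ^ p ≤ 1 := Real.rpow_le_one (abs_nonneg _) hx hp.le
        simp [ENNReal.ofReal_eq_zero]; rw [← abs_mul]; linarith
      exact le_antisymm (le_trans (setLIntegral_mono measurable_const hle) (by simp)) zero_le
    rw [hz, add_zero]
    exact partA
  calc ∫⁻ x in {x : ℝ | 1 < |x|}, ENNReal.ofReal (|x| ^ p) ∂ρ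
      ≤ ∫⁻ x in {x : ℝ | 1 < |x|}, (C + C * ENNReal.ofReal (|γ * x| ^ p - 1)) ∂ρ :=
        setLIntegral_mono (by fun_prop) hpt
    _ = C * ρ {x : ℝ | 1 < |x|}
        + C * ∫⁻ x in {x : ℝ | 1 < |x|}, ENNReal.ofReal (|γ * x| ^ p - 1) ∂ρ := by
        rw [lintegral_add_left measurable_const, lintegral_const_mul _ hg, setLIntegral_const]
    _ < ⊤ := by
        refine ENNReal.add_lt_top.mpr ⟨?_, ?_⟩
        · exact ENNReal.mul_lt_top hCt (tail_fin ρ hlevy one_pos)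
        · exact ENNReal.mul_lt_top hCt
            (lt_of_le_of_lt (setLIntegral_le_lintegral _ _) hSg)
end
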